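/- arXiv:0903.0530 — 2 statements merged into one kernel-verified Lean document; each statement's English description precedes it below -/
import Mathlib

section
/- Let k ≥ 2 be an integer, a ≥ 1, b ≥ 0 integers with gcd(a,b)=1, and let p ≤ k be a prime with p ∤ a and v_p(k+1) ≥ e_{p,k}, where e_{p,k} = ⌊log_p k⌋. Then v_p(g_{k,a,b}(n+1)) = v_p(g_{k,a,b}(n)) for every positive integer n; i.e., n ↦ v_p(g_{k,a,b}(n)) is constant. -/
private lemma sup_range_shift (g : ℕ → ℕ) : ∀ m : ℕ,
    (Finset.range (m+1)).sup g = g 0 ⊔ (Finset.range m).sup (fun i => g (i+1)) := by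
  intro m
  induction m with
  | zero => simp
  | succ m ih =>
      rw [Finset.range_add_one, Finset.sup_insert, ih, Finset.range_add_one,
        Finset.sup_insert, sup_left_comm]

private lemma lcm_fact {p : ℕ} (hp : p.Prime) (s : Finset ℕ) (f : ℕ → ℕ)
    (hf : ∀ i ∈ s, f i ≠ 0) :
    s.lcm f ≠ 0 ∧ (s.lcm f).factorization p = s.sup fun i => (f i).factorization p := by
  induction s using Finset.induction_on with
  | empty => simp
  | @insert c s hc ih =>
      obtain ⟨h0, h1⟩ := ih (fun i hi => hf i (Finset.mem_insert_of_mem hi))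
      have hfc : f c ≠ 0 := hf c (Finset.mem_insert_self c s)
      rw [Finset.lcm_insert, lcm_eq_nat_lcm]
      refine ⟨Nat.lcm_ne_zero hfc h0, ?_⟩
      rw [Nat.factorization_lcm hfc h0, Finset.sup_insert, ← h1, Finsupp.sup_apply]

private lemma key_val (p a b : ℕ) (hp : p.Prime) (ha : 1 ≤ a) (k N : ℕ) (hN : 1 ≤ N) :
    padicValNat p ((∏ i ∈ Finset.range (k+1), (b + (N + i) * a)) /
        (Finset.range (k+1)).lcm (fun i => b + (N + i) * a)) =
    (∑ i ∈ Finset.range (k+1), (b + (N + i) * a).factorization p) -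
    (Finset.range (k+1)).sup (fun i => (b + (N + i) * a).factorization p) := by
  have hne : ∀ i ∈ Finset.range (k+1), b + (N + i) * a ≠ 0 := by
    intro i _
    have h := Nat.le_mul_of_pos_right (N + i) (show 0 < a by omega)
    omega
  have hdvd : (Finset.range (k+1)).lcm (fun i => b + (N + i) * a) ∣
      ∏ i ∈ Finset.range (k+1), (b + (N + i) * a) :=
    Finset.lcm_dvd (fun i hi => Finset.dvd_prod_of_mem _ hi)
  rw [← Nat.factorization_def _ hp, Nat.factorization_div hdvd, Finsupp.tsub_apply,
    Nat.factorization_prod hne, Finset.sum_apply',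
    (lcm_fact hp (Finset.range (k+1)) (fun i => b + (N + i) * a) hne).2]

theorem stmt14 (k a b : ℕ) (hk : 2 ≤ k) (ha : 1 ≤ a) (hab : Nat.gcd a b = 1)
    (p : ℕ) (hp : p.Prime) (hpk : p ≤ k) (hpa : ¬ p ∣ a)
    (hv : Nat.log p k ≤ padicValNat p (k + 1)) (n : ℕ) (hn : 1 ≤ n) :
    padicValNat p ((∏ i ∈ Finset.range (k+1), (b + (n + 1 + i) * a)) /
        (Finset.range (k+1)).lcm (fun i => b + (n + 1 + i) * a)) =
    padicValNat p ((∏ i ∈ Finset.range (k+1), (b + (n + i) * a)) /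
        (Finset.range (k+1)).lcm (fun i => b + (n + i) * a)) := by
  set e := Nat.log p k with he
  have hppos := hp.one_lt
  have hk0 : k ≠ 0 := by omega
  have hk_lt : k < p ^ (e + 1) := Nat.lt_pow_succ_log_self hppos k
  have hne : ∀ m, 1 ≤ m → b + m * a ≠ 0 := by
    intro m hm
    have h := Nat.le_mul_of_pos_right m (show 0 < a by omega)
    omega
  -- separation lemma: two terms within the window can't both be divisible by p^(e+1)
  have hsep : ∀ m1 m2 : ℕ, m1 < m2 → m2 - m1 ≤ k → p ^ (e+1) ∣ (b + m1 * a) →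
      p ^ (e+1) ∣ (b + m2 * a) → False := by
    intro m1 m2 hlt hle h1 h2
    have hq : b + m2 * a = (b + m1 * a) + (m2 - m1) * a := by
      have : m2 * a = m1 * a + (m2 - m1) * a := by
        rw [← Nat.add_mul]; congr 1; omega
      omega
    have hd : p ^ (e+1) ∣ (m2 - m1) * a := by
      have h3 := Nat.dvd_sub h2 h1
      rwa [hq, Nat.add_sub_cancel_left] at h3
    have hd2 : p ^ (e+1) ∣ (m2 - m1) :=
      ((hp.coprime_iff_not_dvd.2 hpa).pow_left _).dvd_of_dvd_mul_right hd
    have h4 := Nat.le_of_dvd (by omega) hd2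
    have h5 : p ^ (e+1) ≤ k := by omega
    omega
  -- endpoints: divisibility transfers for j ≤ v_p(k+1)
  have hstep : ∀ j : ℕ, j ≤ padicValNat p (k+1) →
      (p ^ j ∣ (b + n * a) ↔ p ^ j ∣ (b + (n + 1 + k) * a)) := by
    intro j hj
    have hdab : p ^ j ∣ (k + 1) * a :=
      Dvd.dvd.mul_right ((pow_dvd_pow p hj).trans pow_padicValNat_dvd) a
    have hq : b + (n + 1 + k) * a = (b + n * a) + (k + 1) * a := by ring
    constructor
    · intro h; rw [hq]; exact dvd_add h hdab
    · intro h
      rw [hq] at h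
      have h2 := Nat.dvd_sub h hdab
      rwa [Nat.add_sub_cancel] at h2
  have hyne : b + n * a ≠ 0 := hne n hn
  have hxne : b + (n + 1 + k) * a ≠ 0 := hne _ (by omega)
  set x := (b + (n + 1 + k) * a).factorization p with hx
  set y := (b + n * a).factorization p with hy
  -- the disjunction
  have hdisj : y = x ∨ (e ≤ x ∧ e ≤ y) := by
    by_cases hcy : padicValNat p (k+1) ≤ y
    · right
      have hey : e ≤ y := le_trans hv hcy
      refine ⟨?_, hey⟩
      have h1 : p ^ e ∣ (b + n * a) :=
        (hp.pow_dvd_iff_le_factorization hyne).2 hey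
      exact (hp.pow_dvd_iff_le_factorization hxne).1 ((hstep e hv).1 h1)
    · left
      have hyd : p ^ y ∣ (b + (n + 1 + k) * a) :=
        (hstep y (by omega)).1 (Nat.ordProj_dvd _ p)
      have hle1 : y ≤ x := (hp.pow_dvd_iff_le_factorization hxne).1 hyd
      have hnd : ¬ p ^ (y+1) ∣ (b + (n + 1 + k) * a) := by
        intro h
        exact Nat.pow_succ_factorization_not_dvd hyne hp ((hstep (y+1) (by omega)).2 h)
      have hle2 : ¬ (y + 1 ≤ x) := fun h => hnd ((hp.pow_dvd_iff_le_factorization hxne).2 h)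
      omega
  -- interior valuations are ≤ e when x ≠ y
  have hII : x ≠ y → ∀ i ∈ Finset.range k, (b + (n + 1 + i) * a).factorization p ≤ e := by
    intro hxy i hi
    have hik : i < k := Finset.mem_range.1 hi
    by_contra hgt
    push_neg at hgt
    have hmd : p ^ (e+1) ∣ (b + (n + 1 + i) * a) :=
      (hp.pow_dvd_iff_le_factorization (hne _ (by omega))).2 hgt
    obtain ⟨hex, hey⟩ : e ≤ x ∧ e ≤ y := hdisj.resolve_left (fun h => hxy h.symm)
    have hyle : y ≤ e := by
      by_contra hyl
      push_neg at hyl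
      have hyd : p ^ (e+1) ∣ (b + n * a) :=
        (hp.pow_dvd_iff_le_factorization hyne).2 hyl
      exact hsep n (n + 1 + i) (by omega) (by omega) hyd hmd
    have hxle : x ≤ e := by
      by_contra hxl
      push_neg at hxl
      have hxd : p ^ (e+1) ∣ (b + (n + 1 + k) * a) :=
        (hp.pow_dvd_iff_le_factorization hxne).2 hxl
      exact hsep (n + 1 + i) (n + 1 + k) (by omega) (by omega) hmd hxd
    exact hxy (by omega)
  -- rewrite via key_val
  rw [key_val p a b hp ha k (n+1) (by omega), key_val p a b hp ha k n hn]
  -- decompose sums and sups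
  have hA1 : (∑ i ∈ Finset.range (k+1), (b + (n + 1 + i) * a).factorization p) =
      (∑ i ∈ Finset.range k, (b + (n + 1 + i) * a).factorization p) + x :=
    Finset.sum_range_succ _ k
  have hA2 : (∑ i ∈ Finset.range (k+1), (b + (n + i) * a).factorization p) =
      (∑ i ∈ Finset.range k, (b + (n + 1 + i) * a).factorization p) + y := by
    rw [Finset.sum_range_succ' (fun i => (b + (n + i) * a).factorization p) k]
    congr 1
    · refine Finset.sum_congr rfl fun i _ => ?_
      show (b + (n + (i + 1)) * a).factorization p = (b + (n + 1 + i) * a).factorization p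
      rw [show n + (i + 1) = n + 1 + i by omega]
  have hB1 : (Finset.range (k+1)).sup (fun i => (b + (n + 1 + i) * a).factorization p) =
      x ⊔ (Finset.range k).sup (fun i => (b + (n + 1 + i) * a).factorization p) := by
    rw [Finset.range_add_one, Finset.sup_insert]
  have hB2 : (Finset.range (k+1)).sup (fun i => (b + (n + i) * a).factorization p) =
      y ⊔ (Finset.range k).sup (fun i => (b + (n + 1 + i) * a).factorization p) := by
    rw [sup_range_shift (fun i => (b + (n + i) * a).factorization p) k]
    congr 1
    refine Finset.sup_congr rfl fun i _ => ?_
    show (b + (n + (i + 1)) * a).factorization p = (b + (n + 1 + i) * a).factorization p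
    rw [show n + (i + 1) = n + 1 + i by omega]
  rw [hA1, hA2, hB1, hB2]
  set S := ∑ i ∈ Finset.range k, (b + (n + 1 + i) * a).factorization p with hS
  set I := (Finset.range k).sup (fun i => (b + (n + 1 + i) * a).factorization p) with hI
  by_cases hxy : x = y
  · rw [hxy]
  · have hIe : I ≤ e := Finset.sup_le (hII hxy)
    obtain ⟨hex, hey⟩ : e ≤ x ∧ e ≤ y := hdisj.resolve_left (fun h => hxy h.symm)
    rw [sup_eq_left.2 (le_trans hIe hex), sup_eq_left.2 (le_trans hIe hey)]
    omega
end

section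
/- Let k ≥ 2, a ≥ 1, b ≥ 0 be integers with gcd(a,b)=1, and suppose P is the smallest period of the periodic function g_{k,a,b}: ℕ → ℕ given by g_{k,a,b}(n) = (∏_{i=0}^{k}(b+(n+i)a)) / lcm(b+na, ..., b+(n+k)a). Then P = L_k / (δ_{k,a} · ∏_{q prime, q ∣ gcd(a, L_k)} q^{⌊log_q k⌋}), where L_k = lcm(1,2,...,k) and δ_{k,a} = p^{⌊log_p k⌋} if there exists a prime p ≤ k with p ∤ a and v_p(k+1) ≥ ⌊log_p k⌋, and δ_{k,a} = 1 otherwise. -/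
open Finset

lemma st18_lcm_ne_zero (s : Finset ℕ) (f : ℕ → ℕ) (hf : ∀ i ∈ s, f i ≠ 0) :
    s.lcm f ≠ 0 := by
  rw [Ne, Finset.lcm_eq_zero_iff]
  rintro ⟨i, hi, h0⟩
  exact hf i hi h0

lemma st18_fact_lcm (s : Finset ℕ) (f : ℕ → ℕ) (hf : ∀ i ∈ s, f i ≠ 0) (p : ℕ) :
    (s.lcm f).factorization p = s.sup fun i => (f i).factorization p := by
  induction s using Finset.induction_on with
  | empty => simp
  | @insert x s' hx ih =>
    rw [Finset.lcm_insert, Finset.sup_insert]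
    have h1 : f x ≠ 0 := hf x (mem_insert_self _ _)
    have h2 : s'.lcm f ≠ 0 := st18_lcm_ne_zero s' f fun i hi => hf i (mem_insert_of_mem hi)
    rw [lcm_eq_nat_lcm, Nat.factorization_lcm h1 h2, Finsupp.sup_apply,
      ih fun i hi => hf i (mem_insert_of_mem hi)]

lemma st18_root (a b p e : ℕ) (hp : p.Prime) (hpa : ¬ p ∣ a) :
    ∃ x₀, ∀ x : ℕ, p ^ e ∣ b + x * a ↔ x % p ^ e = x₀ % p ^ e := by
  have hco : Nat.Coprime a (p ^ e) :=
    ((Nat.Prime.coprime_iff_not_dvd hp).mpr hpa).symm.pow_right e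
  haveI : NeZero (p ^ e) := ⟨(pow_pos hp.pos e).ne'⟩
  set m := p ^ e with hm
  let u : (ZMod m)ˣ := ZMod.unitOfCoprime a hco
  have hu : ((u : (ZMod m)ˣ) : ZMod m) = (a : ZMod m) := ZMod.coe_unitOfCoprime a hco
  refine ⟨(-(b : ZMod m) * ↑u⁻¹).val, fun x => ?_⟩
  rw [← ZMod.natCast_eq_zero_iff, ← ZMod.natCast_eq_natCast_iff']
  have hval : (((-(b : ZMod m) * ↑u⁻¹).val : ℕ) : ZMod m) = -(b : ZMod m) * ↑u⁻¹ :=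
    ZMod.natCast_rightInverse _
  rw [hval]
  push_cast
  constructor
  · intro h
    have h2 : (x : ZMod m) * ↑u = -↑b := by rw [← hu] at h; linear_combination h
    rw [← h2, mul_assoc, Units.mul_inv, mul_one]
  · intro h
    rw [h, ← hu]
    have h3 : ((u⁻¹ : (ZMod m)ˣ) : ZMod m) * ↑u = 1 := Units.inv_mul u
    linear_combination (-(b : ZMod m)) * h3

def st18_chi (a b d x : ℕ) : ℕ := if d ∣ b + x * a then 1 else 0

def st18_cnt (a b d u v : ℕ) : ℕ := ∑ x ∈ Finset.Ico u v, st18_chi a b d x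

lemma st18_chi_shift (a b d x s : ℕ) (hs : d ∣ s) :
    st18_chi a b d (x + s) = st18_chi a b d x := by
  unfold st18_chi
  have h0 : b + (x + s) * a = (b + x * a) + s * a := by ring
  rw [h0]
  by_cases h : d ∣ b + x * a
  · rw [if_pos h, if_pos (dvd_add h (hs.mul_right a))]
  · rw [if_neg h, if_neg (fun hc => h (by simpa using Nat.dvd_sub hc (hs.mul_right a)))]

lemma st18_cnt_add (a b d u v w : ℕ) (h1 : u ≤ v) (h2 : v ≤ w) :
    st18_cnt a b d u v + st18_cnt a b d v w = st18_cnt a b d u w :=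
  Finset.sum_Ico_consecutive _ h1 h2

lemma st18_cnt_one (a b d u : ℕ) : st18_cnt a b d u (u + 1) = st18_chi a b d u := by
  unfold st18_cnt
  rw [Nat.Ico_succ_singleton, Finset.sum_singleton]

lemma st18_cnt_shift (a b d u v s : ℕ) (hs : d ∣ s) :
    st18_cnt a b d (u + s) (v + s) = st18_cnt a b d u v := by
  unfold st18_cnt
  rw [Finset.sum_Ico_eq_sum_range, Finset.sum_Ico_eq_sum_range]
  have hlen : v + s - (u + s) = v - u := by omega
  rw [hlen]
  refine Finset.sum_congr rfl fun i _ => ?_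
  have h0 : u + s + i = (u + i) + s := by ring
  rw [h0, st18_chi_shift a b d (u + i) s hs]

lemma st18_window (a b m x₀ : ℕ) (hm : 0 < m)
    (hroot : ∀ x, m ∣ b + x * a ↔ x % m = x₀ % m) (n : ℕ) :
    st18_cnt a b m n (n + m) = 1 := by
  induction n with
  | zero =>
    unfold st18_cnt st18_chi
    rw [show (0 : ℕ) + m = m from by omega, ← Finset.range_eq_Ico]
    have h0 : ∀ x ∈ Finset.range m, (if m ∣ b + x * a then (1:ℕ) else 0)
        = if x = x₀ % m then 1 else 0 := by
      intro x hx
      simp only [hroot x, Nat.mod_eq_of_lt (Finset.mem_range.mp hx)]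
    rw [Finset.sum_congr rfl h0, Finset.sum_ite_eq' (Finset.range m) (x₀ % m) (fun _ => 1),
      if_pos (Finset.mem_range.mpr (Nat.mod_lt _ hm))]
  | succ n ih =>
    have e1 := st18_cnt_add a b m n (n + 1) (n + m + 1) (by omega) (by omega)
    have e2 := st18_cnt_add a b m n (n + m) (n + m + 1) (by omega) (by omega)
    have e4 : st18_cnt a b m (n + m) (n + m + 1) = st18_cnt a b m n (n + 1) := by
      rw [st18_cnt_one, st18_cnt_one, st18_chi_shift a b m n m dvd_rfl]
    rw [show n + 1 + m = n + m + 1 from by omega]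
    omega

def st18_c (k a b p e n : ℕ) : ℕ :=
  ((Finset.range (k+1)).filter (fun i => p ^ e ∣ b + (n + i) * a)).card
def st18_G (k a b n : ℕ) : ℕ :=
  (∏ i ∈ Finset.range (k+1), (b + (n + i) * a)) /
    (Finset.range (k+1)).lcm (fun i => b + (n + i) * a)

lemma st18_c_cnt (k a b p e n : ℕ) :
    st18_c k a b p e n = st18_cnt a b (p ^ e) n (n + (k + 1)) := by
  unfold st18_c st18_cnt st18_chi
  rw [Finset.card_filter, Finset.sum_Ico_eq_sum_range]
  simp

lemma st18_tpos (a b : ℕ) (ha : 1 ≤ a) (x : ℕ) (hx : 1 ≤ x) : 0 < b + x * a :=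
  lt_of_lt_of_le (Nat.mul_pos hx ha) (Nat.le_add_left _ _)

lemma st18_core (k a b p : ℕ) (hk : 1 ≤ k) (ha : 1 ≤ a) (hp : p.Prime) (hpa : ¬ p ∣ a)
    (n : ℕ) (hn : 1 ≤ n) :
    (st18_G k a b n).factorization p + Nat.log p k
      = ∑ e ∈ Finset.Icc 1 (Nat.log p k), st18_c k a b p e n := by
  set L := Nat.log p k with hL
  set t : ℕ → ℕ := fun i => b + (n + i) * a with ht
  have ht_ne : ∀ i ∈ Finset.range (k+1), t i ≠ 0 :=
    fun i _ => (st18_tpos a b ha (n + i) (by omega)).ne'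
  have hΛdvd : (Finset.range (k+1)).lcm t ∣ ∏ i ∈ Finset.range (k+1), t i :=
    Finset.lcm_dvd fun i hi => Finset.dvd_prod_of_mem t hi
  have hprod_ne : (∏ i ∈ Finset.range (k+1), t i) ≠ 0 :=
    Finset.prod_ne_zero_iff.mpr ht_ne
  have hΛ_ne : (Finset.range (k+1)).lcm t ≠ 0 := st18_lcm_ne_zero _ _ ht_ne
  set M := (Finset.range (k+1)).sup fun i => (t i).factorization p with hM
  have hlcmM : ((Finset.range (k+1)).lcm t).factorization p = M := st18_fact_lcm _ _ ht_ne p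
  -- maximizer
  have hne : (Finset.range (k+1)).Nonempty := Finset.nonempty_range_iff.mpr (Nat.succ_ne_zero k)
  obtain ⟨i₀, hi₀mem, hi₀⟩ :=
    Finset.exists_mem_eq_sup (Finset.range (k+1)) hne (fun i => (t i).factorization p)
  -- each valuation as sum of indicators
  have claim1 : ∀ i ∈ Finset.range (k+1), (t i).factorization p
      = ∑ e ∈ Finset.Icc 1 M, (if p ^ e ∣ t i then 1 else 0) := by
    intro i hi
    have hvle : (t i).factorization p ≤ M := by
      rw [hM]; exact Finset.le_sup (f := fun i => (t i).factorization p) hi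
    have h1 : ∀ e ∈ Finset.Icc 1 M, (if p ^ e ∣ t i then (1:ℕ) else 0)
        = if e ≤ (t i).factorization p then 1 else 0 := by
      intro e _
      exact if_congr (hp.pow_dvd_iff_le_factorization (ht_ne i hi)) rfl rfl
    rw [Finset.sum_congr rfl h1, ← Finset.card_filter]
    have h2 : (Finset.Icc 1 M).filter (fun e => e ≤ (t i).factorization p)
        = Finset.Icc 1 ((t i).factorization p) := by
      ext e
      simp only [Finset.mem_filter, Finset.mem_Icc]
      omega
    rw [h2, Nat.card_Icc]
    omega
  -- sum of valuations
  have hsum : (∏ i ∈ Finset.range (k+1), t i).factorization p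
      = ∑ e ∈ Finset.Icc 1 M, st18_c k a b p e n := by
    rw [Nat.factorization_prod ht_ne, Finset.sum_apply',
      Finset.sum_congr rfl claim1, Finset.sum_comm]
    refine Finset.sum_congr rfl fun e _ => ?_
    rw [st18_c, Finset.card_filter]
  -- existence of multiple of p^L
  obtain ⟨x₀, hroot⟩ := st18_root a b p L hp hpa
  have hpLk : p ^ L ≤ k := Nat.pow_log_le_self p (by omega)
  have hpL_pos : 0 < p ^ L := pow_pos hp.pos L
  have claim2 : ∃ i ∈ Finset.range (k+1), p ^ L ∣ t i := by
    have hw := st18_window a b (p ^ L) x₀ hpL_pos hroot n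
    rw [st18_cnt] at hw
    have hw' : (∑ x ∈ Finset.Ico n (n + p ^ L), st18_chi a b (p ^ L) x) ≠ 0 := by
      rw [hw]; exact one_ne_zero
    obtain ⟨x, hx, hχ⟩ := Finset.exists_ne_zero_of_sum_ne_zero hw'
    rw [Finset.mem_Ico] at hx
    have hdvd : p ^ L ∣ b + x * a := by
      by_contra hc
      rw [st18_chi, if_neg hc] at hχ
      exact hχ rfl
    refine ⟨x - n, Finset.mem_range.mpr (by omega), ?_⟩
    have : n + (x - n) = x := by omega
    rw [ht]; simpa [this] using hdvd
  have hLM : L ≤ M := by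
    obtain ⟨i, hi, hdvd⟩ := claim2
    calc L ≤ (t i).factorization p :=
          (hp.pow_dvd_iff_le_factorization (ht_ne i hi)).mp hdvd
      _ ≤ M := by rw [hM]; exact Finset.le_sup (f := fun i => (t i).factorization p) hi
  -- counts are 1 in (L, M]
  have claim34 : ∀ e ∈ Finset.Ioc L M, st18_c k a b p e n = 1 := by
    intro e he
    rw [Finset.mem_Ioc] at he
    rw [st18_c, Finset.card_eq_one]
    have hle : ∀ i ∈ Finset.range (k+1), ∀ j ∈ Finset.range (k+1),
        p ^ e ∣ t i → p ^ e ∣ t j → i = j := by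
      have key : ∀ i j, i ≤ j → j < k + 1 → p ^ e ∣ t i → p ^ e ∣ t j → i = j := by
        intro i j hij hjk hdi hdj
        have hmul : (n + j) * a = (n + i) * a + (j - i) * a := by
          rw [← Nat.add_mul]; congr 1; omega
        have hsub : t j - t i = (j - i) * a := by
          show (b + (n + j) * a) - (b + (n + i) * a) = _
          omega
        have : p ^ e ∣ (j - i) * a := hsub ▸ Nat.dvd_sub hdj hdi
        have hco : Nat.Coprime (p ^ e) a :=
          ((Nat.Prime.coprime_iff_not_dvd hp).mpr hpa).pow_left e
        have hdvd2 : p ^ e ∣ j - i := hco.dvd_of_dvd_mul_right this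
        have hklt : k < p ^ (L + 1) := Nat.lt_pow_succ_log_self hp.one_lt k
        have hple : p ^ (L + 1) ≤ p ^ e := Nat.pow_le_pow_right hp.pos he.1
        have hz : j - i = 0 := by
          by_contra hz
          exact absurd (Nat.le_of_dvd (by omega) hdvd2) (by omega)
        omega
      intro i hi j hj hdi hdj
      rcases le_total i j with h | h
      · exact key i j h (Finset.mem_range.mp hj) hdi hdj
      · exact (key j i h (Finset.mem_range.mp hi) hdj hdi).symm
    have hex : p ^ e ∣ t i₀ := by
      rw [hp.pow_dvd_iff_le_factorization (ht_ne i₀ hi₀mem), ← hi₀]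
      exact he.2
    refine ⟨i₀, ?_⟩
    ext j
    simp only [Finset.mem_filter, Finset.mem_singleton]
    constructor
    · rintro ⟨hj, hdj⟩
      exact hle j hj i₀ hi₀mem hdj hex
    · rintro rfl
      exact ⟨hi₀mem, hex⟩
  -- assemble
  have hsplit : (∑ e ∈ Finset.Ioc 0 L, st18_c k a b p e n)
      + (∑ e ∈ Finset.Ioc L M, st18_c k a b p e n)
      = ∑ e ∈ Finset.Ioc 0 M, st18_c k a b p e n :=
    Finset.sum_Ioc_consecutive _ (by omega) hLM
  have hIoc : ∀ x : ℕ, Finset.Icc 1 x = Finset.Ioc 0 x := fun x => by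
    ext e; simp [Finset.mem_Icc, Finset.mem_Ioc]; omega
  have htail : ∑ e ∈ Finset.Ioc L M, st18_c k a b p e n = M - L := by
    rw [Finset.sum_congr rfl claim34, Finset.sum_const, Nat.card_Ioc, smul_eq_mul, mul_one]
  have hdiv : (st18_G k a b n).factorization p
      = (∏ i ∈ Finset.range (k+1), t i).factorization p
        - ((Finset.range (k+1)).lcm t).factorization p := by
    rw [st18_G, Nat.factorization_div hΛdvd]
    rfl
  have hcpos : ∀ e ∈ Finset.Icc 1 L, 1 ≤ st18_c k a b p e n := by
    intro e he
    rw [Finset.mem_Icc] at he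
    rw [st18_c]
    have hex : p ^ e ∣ t i₀ := by
      rw [hp.pow_dvd_iff_le_factorization (ht_ne i₀ hi₀mem), ← hi₀]
      omega
    exact Finset.card_pos.mpr ⟨i₀, Finset.mem_filter.mpr ⟨hi₀mem, hex⟩⟩
  have hlow : L ≤ ∑ e ∈ Finset.Icc 1 L, st18_c k a b p e n := by
    have := Finset.card_nsmul_le_sum (Finset.Icc 1 L) (fun e => st18_c k a b p e n) 1 hcpos
    simpa [Nat.card_Icc] using this
  have hGM : (st18_G k a b n).factorization p
      = (∑ e ∈ Finset.Icc 1 M, st18_c k a b p e n) - M := by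
    rw [hdiv, hlcmM, hsum]
  have hsplit' : ∑ e ∈ Finset.Icc 1 M, st18_c k a b p e n
      = (∑ e ∈ Finset.Icc 1 L, st18_c k a b p e n) + (M - L) := by
    rw [hIoc M, hIoc L, ← hsplit, htail]
  omega

lemma st18_period_iter {f : ℕ → ℕ} {T : ℕ} (hT : ∀ n, 1 ≤ n → f (n + T) = f n) :
    ∀ j n, 1 ≤ n → f (n + j * T) = f n := by
  intro j
  induction j with
  | zero => simp
  | succ j ih =>
    intro n hn
    have h1 : n + (j + 1) * T = (n + j * T) + T := by ring
    rw [h1, hT _ (by omega), ih n hn]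

lemma st18_period_dvd {f : ℕ → ℕ} {d s : ℕ} (hd : ∀ n, 1 ≤ n → f (n + d) = f n)
    (hds : d ∣ s) : ∀ n, 1 ≤ n → f (n + s) = f n := by
  obtain ⟨c, rfl⟩ := hds
  intro n hn
  rw [mul_comm]
  exact st18_period_iter hd c n hn

lemma st18_period_gcd {f : ℕ → ℕ} {T m : ℕ} (hm : 0 < m)
    (hT : ∀ n, 1 ≤ n → f (n + T) = f n) (hm2 : ∀ n, 1 ≤ n → f (n + m) = f n) :
    ∀ n, 1 ≤ n → f (n + Nat.gcd T m) = f n := by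
  intro n hn
  rcases Nat.eq_zero_or_pos T with rfl | hTpos
  · rw [Nat.gcd_zero_left]; exact hm2 n hn
  set g := Nat.gcd T m with hg
  have hgm : g ∣ m := Nat.gcd_dvd_right T m
  have hgle : g ≤ m := Nat.le_of_dvd hm hgm
  have hbez : (g : ℤ) = T * Nat.gcdA T m + m * Nat.gcdB T m := Nat.gcd_eq_gcd_ab T m
  set x : ℤ := Nat.gcdA T m with hxdef
  have hmpos : (0:ℤ) < m := by exact_mod_cast hm
  set u : ℕ := (x % m).toNat + m with hu
  have hx : ((x % m).toNat : ℤ) = x % m := Int.toNat_of_nonneg (Int.emod_nonneg x (by omega))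
  have hucast : (u : ℤ) = x % m + m := by rw [hu]; push_cast; rw [hx]
  set W : ℤ := T - T * (x / m) - Nat.gcdB T m with hWdef
  have hexp : (T:ℤ) * u - g = m * W := by
    rw [hucast, hbez, hWdef, Int.emod_def]; ring
  have huge : g ≤ T * u := by
    calc g ≤ m := hgle
    _ ≤ u := by omega
    _ ≤ T * u := Nat.le_mul_of_pos_left u hTpos
  have hWnn : 0 ≤ W := by
    by_contra hW
    push_neg at hW
    have h1 : (m:ℤ) * W < 0 := mul_neg_of_pos_of_neg hmpos hW
    rw [← hexp] at h1
    have : (g:ℤ) ≤ (T:ℤ) * u := by exact_mod_cast huge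
    omega
  have hweq : T * u = g + W.toNat * m := by
    have h2 : ((T * u : ℕ) : ℤ) = ((g + W.toNat * m : ℕ) : ℤ) := by
      push_cast [Int.toNat_of_nonneg hWnn]
      linarith [hexp]
    exact_mod_cast h2
  calc f (n + g) = f (n + g + W.toNat * m) :=
        (st18_period_iter hm2 W.toNat (n + g) (by omega)).symm
    _ = f (n + u * T) := by rw [mul_comm u T]; congr 1; omega
    _ = f n := st18_period_iter hT u n hn

lemma st18_c_shift (k a b p e n s : ℕ) (hs : p ^ e ∣ s) :
    st18_c k a b p e (n + s) = st18_c k a b p e n := by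
  rw [st18_c_cnt, st18_c_cnt, ← st18_cnt_shift a b (p ^ e) n (n + (k+1)) s hs]
  congr 1
  omega

lemma st18_gcd_ppow {p L T : ℕ} (hp : p.Prime) (hL : 1 ≤ L) (hndvd : ¬ p ^ L ∣ T) :
    Nat.gcd T (p ^ L) ∣ p ^ (L - 1) := by
  obtain ⟨j, hj, hgj⟩ := (Nat.dvd_prime_pow hp).mp (Nat.gcd_dvd_right T (p ^ L))
  have hjL : j ≠ L := by
    rintro rfl
    exact hndvd (hgj ▸ Nat.gcd_dvd_left T (p ^ j))
  rw [hgj]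
  exact pow_dvd_pow p (by omega)

lemma st18_necessity (k a b p T : ℕ) (hk : 1 ≤ k) (ha : 1 ≤ a)
    (hp : p.Prime) (hpa : ¬ p ∣ a) (hpk : p ≤ k)
    (hbad : ¬ p ^ Nat.log p k ∣ (k + 1))
    (hT : ∀ n, 1 ≤ n → st18_G k a b (n + T) = st18_G k a b n) :
    p ^ Nat.log p k ∣ T := by
  set L := Nat.log p k with hLdef
  have hL1 : 1 ≤ L := Nat.log_pos hp.one_lt hpk
  by_contra hndvd
  set hh := p ^ (L - 1) with hhdef
  have hh_pos : 0 < hh := pow_pos hp.pos _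
  have hpL_pos : 0 < p ^ L := pow_pos hp.pos _
  have hhp : p ^ L = hh * p := by
    rw [hhdef, ← pow_succ]
    congr 1
    omega
  -- F has period T (n ≥ 1)
  set F : ℕ → ℕ := fun n => ∑ e ∈ Finset.Icc 1 L, st18_c k a b p e n with hFdef
  have hFT : ∀ n, 1 ≤ n → F (n + T) = F n := by
    intro n hn
    have h1 := st18_core k a b p hk ha hp hpa n hn
    have h2 := st18_core k a b p hk ha hp hpa (n + T) (by omega)
    rw [hT n hn] at h2
    rw [← hLdef] at h1 h2
    simp only [hFdef]
    omega
  -- F has period p^L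
  have hFm : ∀ n, 1 ≤ n → F (n + p ^ L) = F n := by
    intro n _
    simp only [hFdef]
    refine Finset.sum_congr rfl fun e he => ?_
    rw [Finset.mem_Icc] at he
    exact st18_c_shift k a b p e n (p ^ L) (pow_dvd_pow p he.2)
  -- hence F has period h = p^(L-1)
  have hFh : ∀ n, 1 ≤ n → F (n + hh) = F n :=
    st18_period_dvd (st18_period_gcd hpL_pos hFT hFm) (st18_gcd_ppow hp hL1 hndvd)
  -- c_L has period h
  have hcLh : ∀ n, 1 ≤ n → st18_c k a b p L (n + hh) = st18_c k a b p L n := by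
    intro n hn
    have h1 := hFh n hn
    simp only [hFdef] at h1
    have hsplit : ∀ m : ℕ, ∑ e ∈ Finset.Icc 1 L, st18_c k a b p e m
        = (∑ e ∈ Finset.Icc 1 (L - 1), st18_c k a b p e m) + st18_c k a b p L m := by
      intro m
      have hs := Finset.sum_Icc_succ_top (a := 1) (b := L - 1) (by omega)
        (fun e => st18_c k a b p e m)
      rw [show L - 1 + 1 = L from by omega] at hs
      exact hs
    rw [hsplit, hsplit] at h1
    have hlow : ∀ e ∈ Finset.Icc 1 (L - 1), st18_c k a b p e (n + hh) = st18_c k a b p e n := by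
      intro e he
      rw [Finset.mem_Icc] at he
      exact st18_c_shift k a b p e n hh (pow_dvd_pow p (by omega))
    rw [Finset.sum_congr rfl hlow] at h1
    omega
  -- window function W
  set Wf : ℕ → ℕ := fun n => st18_cnt a b (p ^ L) n (n + hh) with hWdef
  have hWk : ∀ n, 1 ≤ n → Wf (n + (k + 1)) = Wf n := by
    intro n hn
    have h1 := hcLh n hn
    rw [st18_c_cnt, st18_c_cnt] at h1
    have e1 := st18_cnt_add a b (p ^ L) n (n + hh) (n + hh + (k + 1)) (by omega) (by omega)
    have e2 := st18_cnt_add a b (p ^ L) n (n + (k + 1)) (n + (k + 1) + hh) (by omega) (by omega)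
    rw [show n + hh + (k+1) = n + (k+1) + hh from by omega] at e1 h1
    simp only [hWdef]
    omega
  have hWm : ∀ n, 1 ≤ n → Wf (n + p ^ L) = Wf n := by
    intro n _
    simp only [hWdef]
    rw [← st18_cnt_shift a b (p ^ L) n (n + hh) (p ^ L) dvd_rfl]
    congr 1
    omega
  have hgcd2 : Nat.gcd (k + 1) (p ^ L) ∣ hh := st18_gcd_ppow hp hL1 hbad
  have hWh : ∀ n, 1 ≤ n → Wf (n + hh) = Wf n :=
    st18_period_dvd (st18_period_gcd hpL_pos hWk hWm) hgcd2
  -- sum of p consecutive windows = full window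
  have hwin : ∀ j n, 1 ≤ n → st18_cnt a b (p ^ L) n (n + j * hh) = j * Wf n := by
    intro j
    induction j with
    | zero => intro n _; simp [st18_cnt]
    | succ j ih =>
      intro n hn
      have e1 := st18_cnt_add a b (p ^ L) n (n + j * hh) (n + (j+1) * hh) (by omega)
        (by nlinarith [hh_pos])
      have e2 : st18_cnt a b (p ^ L) (n + j * hh) (n + (j + 1) * hh) = Wf (n + j * hh) := by
        simp only [hWdef]
        congr 1
        ring
      have e3 : Wf (n + j * hh) = Wf n := st18_period_iter hWh j n hn
      rw [ih n hn] at e1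
      rw [e2, e3] at e1
      rw [← e1]
      ring
  -- full window = 1
  obtain ⟨x₀, hroot⟩ := st18_root a b p L hp hpa
  have hfull : st18_cnt a b (p ^ L) 1 (1 + p ^ L) = 1 := st18_window a b (p ^ L) x₀ hpL_pos hroot 1
  have hcontr := hwin p 1 le_rfl
  rw [show p * hh = p ^ L from by rw [hhp]; ring] at hcontr
  rw [hcontr] at hfull
  -- p * Wf 1 = 1 is impossible
  have hdvd1 : p ∣ 1 := ⟨Wf 1, hfull.symm⟩
  have hle1 := Nat.le_of_dvd one_pos hdvd1
  have := hp.two_le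
  omega

lemma st18_c_const (k a b p e : ℕ) (hdvd : p ^ e ∣ k + 1) :
    ∀ n s : ℕ, st18_c k a b p e (n + s) = st18_c k a b p e n := by
  have hstep : ∀ n : ℕ, st18_c k a b p e (n + 1) = st18_c k a b p e n := by
    intro n
    rw [st18_c_cnt, st18_c_cnt]
    have e1 := st18_cnt_add a b (p ^ e) n (n + 1) (n + 1 + (k + 1)) (by omega) (by omega)
    have e2 := st18_cnt_add a b (p ^ e) n (n + (k + 1)) (n + (k + 1) + 1) (by omega) (by omega)
    rw [show n + 1 + (k + 1) = n + (k + 1) + 1 from by omega] at e1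
    have e3 : st18_cnt a b (p ^ e) (n + (k+1)) (n + (k+1) + 1) = st18_cnt a b (p ^ e) n (n + 1) := by
      rw [st18_cnt_one, st18_cnt_one, st18_chi_shift a b (p ^ e) n (k + 1) hdvd]
    rw [show n + 1 + (k + 1) = n + (k + 1) + 1 from by omega]
    omega
  intro n s
  induction s with
  | zero => rfl
  | succ s ih => rw [show n + (s + 1) = (n + s) + 1 from by omega, hstep, ih]

lemma st18_G_pos (k a b n : ℕ) (ha : 1 ≤ a) (hn : 1 ≤ n) : 0 < st18_G k a b n := by
  rw [st18_G]
  have ht_ne : ∀ i ∈ Finset.range (k+1), b + (n + i) * a ≠ 0 :=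
    fun i _ => (st18_tpos a b ha (n + i) (by omega)).ne'
  have hΛdvd : (Finset.range (k+1)).lcm (fun i => b + (n + i) * a)
      ∣ ∏ i ∈ Finset.range (k+1), (b + (n + i) * a) :=
    Finset.lcm_dvd fun i hi => Finset.dvd_prod_of_mem _ hi
  have hΛ : (Finset.range (k+1)).lcm (fun i => b + (n + i) * a) ≠ 0 :=
    st18_lcm_ne_zero _ _ ht_ne
  exact Nat.div_pos (Nat.le_of_dvd (by positivity) hΛdvd) (by omega)

lemma st18_val_a (k a b p n : ℕ) (ha : 1 ≤ a) (hab : Nat.gcd a b = 1)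
    (hp : p.Prime) (hpa : p ∣ a) (hn : 1 ≤ n) :
    (st18_G k a b n).factorization p = 0 := by
  apply Nat.factorization_eq_zero_of_not_dvd
  intro hdvd
  have hGdvd : st18_G k a b n ∣ ∏ i ∈ Finset.range (k+1), (b + (n + i) * a) := by
    rw [st18_G]
    exact Nat.div_dvd_of_dvd (Finset.lcm_dvd fun i hi => Finset.dvd_prod_of_mem _ hi)
  have hpprod : p ∣ ∏ i ∈ Finset.range (k+1), (b + (n + i) * a) := hdvd.trans hGdvd
  obtain ⟨i, _, hpi⟩ := hp.prime.exists_mem_finset_dvd hpprod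
  have hpb : p ∣ b := by
    have : p ∣ (n + i) * a := Dvd.dvd.mul_left hpa _
    have hb := Nat.dvd_sub hpi this
    simpa using hb
  have : p ∣ Nat.gcd a b := Nat.dvd_gcd hpa hpb
  rw [hab] at this
  have := Nat.le_of_dvd one_pos this
  have := hp.two_le
  omega

lemma st18_suff (k a b T : ℕ) (hk : 1 ≤ k) (ha : 1 ≤ a) (hab : Nat.gcd a b = 1)
    (hTp : ∀ p : ℕ, p.Prime → p ≤ k → ¬ p ∣ a → ¬ p ^ Nat.log p k ∣ (k + 1) →
      p ^ Nat.log p k ∣ T) :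
    ∀ n, 1 ≤ n → st18_G k a b (n + T) = st18_G k a b n := by
  intro n hn
  have h1 : st18_G k a b (n + T) ≠ 0 := (st18_G_pos k a b (n + T) ha (by omega)).ne'
  have h2 : st18_G k a b n ≠ 0 := (st18_G_pos k a b n ha hn).ne'
  rw [Nat.eq_iff_prime_padicValNat_eq _ _ h1 h2]
  intro p hp
  rw [← Nat.factorization_def _ hp, ← Nat.factorization_def _ hp]
  by_cases hpa : p ∣ a
  · rw [st18_val_a k a b p (n + T) ha hab hp hpa (by omega),
      st18_val_a k a b p n ha hab hp hpa hn]
  · have c1 := st18_core k a b p hk ha hp hpa n hn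
    have c2 := st18_core k a b p hk ha hp hpa (n + T) (by omega)
    have hsum : ∑ e ∈ Finset.Icc 1 (Nat.log p k), st18_c k a b p e (n + T)
        = ∑ e ∈ Finset.Icc 1 (Nat.log p k), st18_c k a b p e n := by
      refine Finset.sum_congr rfl fun e he => ?_
      rw [Finset.mem_Icc] at he
      have hpk : p ≤ k := by
        have h3 : p ^ 1 ≤ p ^ Nat.log p k := Nat.pow_le_pow_right hp.pos (by omega)
        have h4 : p ^ Nat.log p k ≤ k := Nat.pow_log_le_self p (by omega)
        have h5 : p ^ 1 = p := pow_one p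
        omega
      by_cases hb : p ^ Nat.log p k ∣ k + 1
      · exact st18_c_const k a b p e (dvd_trans (pow_dvd_pow p he.2) hb) n T
      · exact st18_c_shift k a b p e n T ((pow_dvd_pow p he.2).trans (hTp p hp hpk hpa hb))
    omega

lemma st18_prodpow_dvd (s : Finset ℕ) (e : ℕ → ℕ) (N : ℕ)
    (hs : ∀ q ∈ s, Nat.Prime q) (h : ∀ q ∈ s, q ^ e q ∣ N) :
    (∏ q ∈ s, q ^ e q) ∣ N := by
  induction s using Finset.induction_on with
  | empty => simpa using one_dvd N
  | @insert x s' hx ih =>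
    rw [Finset.prod_insert hx]
    have hxp : x.Prime := hs x (mem_insert_self _ _)
    have hco : Nat.Coprime (x ^ e x) (∏ q ∈ s', q ^ e q) := by
      apply Nat.Coprime.pow_left
      apply Nat.Coprime.prod_right
      intro q hq
      have hqp : q.Prime := hs q (mem_insert_of_mem hq)
      have hne : x ≠ q := by rintro rfl; exact hx hq
      exact Nat.Coprime.pow_right _ ((Nat.coprime_primes hxp hqp).mpr hne)
    exact hco.mul_dvd_of_dvd_of_dvd (h x (mem_insert_self _ _))
      (ih (fun q hq => hs q (mem_insert_of_mem hq)) (fun q hq => h q (mem_insert_of_mem hq)))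

lemma st18_fact_prodpow (s : Finset ℕ) (e : ℕ → ℕ) (hs : ∀ q ∈ s, Nat.Prime q) (p : ℕ) :
    (∏ q ∈ s, q ^ e q).factorization p = if p ∈ s then e p else 0 := by
  have hne : ∀ q ∈ s, q ^ e q ≠ 0 := fun q hq => (pow_pos (hs q hq).pos _).ne'
  rw [Nat.factorization_prod hne, Finset.sum_apply']
  have h1 : ∀ q ∈ s, (q ^ e q).factorization p = if q = p then e q else 0 := by
    intro q hq
    rw [(hs q hq).factorization_pow, Finsupp.single_apply]
  rw [Finset.sum_congr rfl h1, Finset.sum_ite_eq' s p e]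

lemma st18_Lk (k : ℕ) (hk : 1 ≤ k) :
    (Finset.Icc 1 k).lcm id = ∏ p ∈ (k+1).primesBelow, p ^ Nat.log p k := by
  have hid : ∀ i ∈ Finset.Icc 1 k, (id i : ℕ) ≠ 0 := by
    intro i hi; rw [Finset.mem_Icc] at hi; simp; omega
  have hLk_ne : (Finset.Icc 1 k).lcm id ≠ 0 := st18_lcm_ne_zero _ _ hid
  have hprimes : ∀ q ∈ (k+1).primesBelow, Nat.Prime q :=
    fun q hq => Nat.prime_of_mem_primesBelow hq
  have hR_ne : (∏ p ∈ (k+1).primesBelow, p ^ Nat.log p k) ≠ 0 :=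
    (Finset.prod_pos fun q hq => pow_pos (hprimes q hq).pos _).ne'
  apply Nat.dvd_antisymm
  · apply Finset.lcm_dvd
    intro m hm
    rw [Finset.mem_Icc] at hm
    have hm0 : (id m : ℕ) ≠ 0 := by simp; omega
    rw [← Nat.factorization_le_iff_dvd hm0 hR_ne]
    intro q
    simp only [id_eq] at *
    by_cases hq0 : m.factorization q = 0
    · simp [hq0]
    · have hqmem : q ∈ m.primeFactors := by
        rw [← Nat.support_factorization]
        exact Finsupp.mem_support_iff.mpr hq0
      have hqp : q.Prime := Nat.prime_of_mem_primeFactors hqmem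
      have hqdvd : q ∣ m := Nat.dvd_of_mem_primeFactors hqmem
      have hqk : q < k + 1 := by
        have := Nat.le_of_dvd (by omega) hqdvd
        omega
      have hmem : q ∈ (k+1).primesBelow := Nat.mem_primesBelow.mpr ⟨hqk, hqp⟩
      rw [st18_fact_prodpow _ _ hprimes q, if_pos hmem]
      have hdvd : q ^ m.factorization q ∣ m := Nat.ordProj_dvd m q
      have hle : q ^ m.factorization q ≤ k := le_trans (Nat.le_of_dvd (by omega) hdvd) hm.2
      exact (Nat.le_log_iff_pow_le hqp.one_lt (by omega)).mpr hle
  · apply st18_prodpow_dvd _ _ _ hprimes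
    intro q hq
    have hqp := hprimes q hq
    have h1 : q ^ Nat.log q k ≤ k := Nat.pow_log_le_self q (by omega)
    have h2 : 0 < q ^ Nat.log q k := pow_pos hqp.pos _
    have hmem : q ^ Nat.log q k ∈ Finset.Icc 1 k := Finset.mem_Icc.mpr ⟨by omega, h1⟩
    exact Finset.dvd_lcm hmem

lemma st18_unique (k p q : ℕ) (hk : 1 ≤ k) (hp : p.Prime) (hq : q.Prime)
    (hpk : p ≤ k) (hqk : q ≤ k) (hne : p ≠ q)
    (h1 : p ^ Nat.log p k ∣ k + 1) (h2 : q ^ Nat.log q k ∣ k + 1) : False := by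
  -- wlog p < q
  have key : ∀ p q : ℕ, p.Prime → q.Prime → p ≤ k → q ≤ k → p < q →
      p ^ Nat.log p k ∣ k + 1 → q ^ Nat.log q k ∣ k + 1 → False := by
    intro p q hp hq hpk hqk hlt h1 h2
    set A := p ^ Nat.log p k with hA
    set B := q ^ Nat.log q k with hB
    have hA0 : 0 < A := pow_pos hp.pos _
    have hco : Nat.Coprime A B :=
      Nat.Coprime.pow _ _ ((Nat.coprime_primes hp hq).mpr (by omega))
    have hAB : A * B ∣ k + 1 := hco.mul_dvd_of_dvd_of_dvd h1 h2
    have hABle : A * B ≤ k + 1 := Nat.le_of_dvd (by omega) hAB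
    have hklt : k < p ^ (Nat.log p k + 1) := Nat.lt_pow_succ_log_self hp.one_lt k
    have hpow : p ^ (Nat.log p k + 1) = A * p := by rw [hA, pow_succ]
    have hBle : B ≤ p := by
      have : A * B ≤ A * p := by omega
      exact Nat.le_of_mul_le_mul_left this hA0
    have hlq : 1 ≤ Nat.log q k := Nat.log_pos hq.one_lt hqk
    have hqB : q ≤ B := by
      rw [hB]
      calc q = q ^ 1 := (pow_one q).symm
      _ ≤ q ^ Nat.log q k := Nat.pow_le_pow_right hq.pos hlq
    omega
  rcases Ne.lt_or_gt hne with h | h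
  · exact key p q hp hq hpk hqk h h1 h2
  · exact key q p hq hp hqk hpk h h2 h1

lemma st18_PF (k a : ℕ) (hk : 1 ≤ k) (ha : 1 ≤ a) :
    (Nat.gcd a ((Finset.Icc 1 k).lcm id)).primeFactors
      = (k+1).primesBelow.filter (· ∣ a) := by
  have hid : ∀ i ∈ Finset.Icc 1 k, (id i : ℕ) ≠ 0 := by
    intro i hi; rw [Finset.mem_Icc] at hi; simp; omega
  have hLk_ne : (Finset.Icc 1 k).lcm id ≠ 0 := st18_lcm_ne_zero _ _ hid
  ext q
  rw [Nat.mem_primeFactors, Finset.mem_filter, Nat.mem_primesBelow]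
  constructor
  · rintro ⟨hq, hdvd, -⟩
    have h1 : q ∣ a := hdvd.trans (Nat.gcd_dvd_left a _)
    have h2 : q ∣ (Finset.Icc 1 k).lcm id := hdvd.trans (Nat.gcd_dvd_right a _)
    rw [st18_Lk k hk] at h2
    obtain ⟨p, hp, hqp⟩ := hq.prime.exists_mem_finset_dvd h2
    have hpp := Nat.prime_of_mem_primesBelow hp
    have : q = p := (Nat.prime_dvd_prime_iff_eq hq hpp).mp (hq.dvd_of_dvd_pow hqp)
    exact ⟨⟨this ▸ Nat.lt_of_mem_primesBelow hp, hq⟩, h1⟩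
  · rintro ⟨⟨hqk, hq⟩, hqa⟩
    refine ⟨hq, Nat.dvd_gcd hqa ?_, ?_⟩
    · have hmem : q ∈ Finset.Icc 1 k := Finset.mem_Icc.mpr ⟨hq.one_lt.le, by omega⟩
      exact Finset.dvd_lcm hmem
    · exact Nat.gcd_ne_zero_left (by omega)

theorem stmt18 (k a b : ℕ) (hk : 2 ≤ k) (ha : 1 ≤ a) (hab : Nat.gcd a b = 1)
    (P : ℕ)
    (hP : IsLeast {T : ℕ | 0 < T ∧ ∀ n : ℕ, 1 ≤ n →
      (∏ i ∈ Finset.range (k+1), (b + (n + T + i) * a)) /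
          (Finset.range (k+1)).lcm (fun i => b + (n + T + i) * a) =
        (∏ i ∈ Finset.range (k+1), (b + (n + i) * a)) /
          (Finset.range (k+1)).lcm (fun i => b + (n + i) * a)} P) :
    ∃ δ : ℕ,
      ((∃ p : ℕ, p.Prime ∧ p ≤ k ∧ ¬ p ∣ a ∧ Nat.log p k ≤ padicValNat p (k + 1) ∧
          δ = p ^ Nat.log p k) ∨
        ((¬ ∃ p : ℕ, p.Prime ∧ p ≤ k ∧ ¬ p ∣ a ∧ Nat.log p k ≤ padicValNat p (k + 1)) ∧
          δ = 1)) ∧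
      P = (Finset.Icc 1 k).lcm id /
        (δ * ∏ q ∈ (Nat.gcd a ((Finset.Icc 1 k).lcm id)).primeFactors, q ^ Nat.log q k) := by
  have hk1 : 1 ≤ k := by omega
  classical
  set PB := (k+1).primesBelow with hPB
  set nd := PB.filter (fun p => ¬ p ∣ a) with hnd
  set bad := nd.filter (fun p => ¬ p ^ Nat.log p k ∣ (k+1)) with hbad
  set T0 := ∏ p ∈ bad, p ^ Nat.log p k with hT0
  have hbad_primes : ∀ q ∈ bad, Nat.Prime q := by
    intro q hq
    rw [hbad, Finset.mem_filter, hnd, Finset.mem_filter] at hq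
    exact Nat.prime_of_mem_primesBelow hq.1.1
  have hT0pos : 0 < T0 := Finset.prod_pos fun q hq => pow_pos (hbad_primes q hq).pos _
  -- T0 is a period
  have hT0S : T0 ∈ {T : ℕ | 0 < T ∧ ∀ n : ℕ, 1 ≤ n →
      (∏ i ∈ Finset.range (k+1), (b + (n + T + i) * a)) /
          (Finset.range (k+1)).lcm (fun i => b + (n + T + i) * a) =
        (∏ i ∈ Finset.range (k+1), (b + (n + i) * a)) /
          (Finset.range (k+1)).lcm (fun i => b + (n + i) * a)} := by
    refine ⟨hT0pos, fun n hn => ?_⟩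
    have hTp : ∀ p : ℕ, p.Prime → p ≤ k → ¬ p ∣ a → ¬ p ^ Nat.log p k ∣ (k + 1) →
        p ^ Nat.log p k ∣ T0 := by
      intro p hp hpk hpa hb
      have hmem : p ∈ bad := by
        rw [hbad, Finset.mem_filter, hnd, Finset.mem_filter]
        exact ⟨⟨Nat.mem_primesBelow.mpr ⟨by omega, hp⟩, hpa⟩, hb⟩
      exact Finset.dvd_prod_of_mem (fun p => p ^ Nat.log p k) hmem
    exact st18_suff k a b T0 hk1 ha hab hTp n hn
  have hPper : ∀ n, 1 ≤ n → st18_G k a b (n + P) = st18_G k a b n :=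
    fun n hn => hP.1.2 n hn
  have hPpos : 0 < P := hP.1.1
  -- every bad prime power divides P
  have hdvdP : ∀ q ∈ bad, q ^ Nat.log q k ∣ P := by
    intro q hq
    have hq' := hq
    rw [hbad, Finset.mem_filter, hnd, Finset.mem_filter] at hq'
    exact st18_necessity k a b q P hk1 ha (Nat.prime_of_mem_primesBelow hq'.1.1) hq'.1.2
      (by have := Nat.lt_of_mem_primesBelow hq'.1.1; omega) hq'.2 hPper
  have hT0dvdP : T0 ∣ P := st18_prodpow_dvd bad _ P hbad_primes hdvdP
  have hPT0 : P = T0 := le_antisymm (hP.2 hT0S) (Nat.le_of_dvd hPpos hT0dvdP)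
  -- arithmetic
  have hsplit : (∏ p ∈ PB.filter (· ∣ a), p ^ Nat.log p k) * (∏ p ∈ nd, p ^ Nat.log p k)
      = ∏ p ∈ PB, p ^ Nat.log p k := by
    rw [hnd]
    exact Finset.prod_filter_mul_prod_filter_not PB _ _
  have hdvpos : 0 < ∏ p ∈ PB.filter (· ∣ a), p ^ Nat.log p k :=
    Finset.prod_pos fun q hq => pow_pos (Nat.prime_of_mem_primesBelow (Finset.mem_filter.mp hq).1).pos _
  by_cases hex : ∃ p : ℕ, p.Prime ∧ p ≤ k ∧ ¬ p ∣ a ∧ Nat.log p k ≤ padicValNat p (k + 1)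
  · obtain ⟨p₀, hp₀, hp₀k, hp₀a, hp₀v⟩ := hex
    have hp₀dvd : p₀ ^ Nat.log p₀ k ∣ k + 1 := by
      rw [hp₀.pow_dvd_iff_le_factorization (by omega : k + 1 ≠ 0),
        Nat.factorization_def _ hp₀]
      exact hp₀v
    have hp₀nd : p₀ ∈ nd := by
      rw [hnd, Finset.mem_filter]
      exact ⟨Nat.mem_primesBelow.mpr ⟨by omega, hp₀⟩, hp₀a⟩
    have hbe : bad = nd.erase p₀ := by
      ext q
      rw [hbad, Finset.mem_filter, Finset.mem_erase]
      constructor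
      · rintro ⟨hqnd, hqb⟩
        refine ⟨?_, hqnd⟩
        rintro rfl
        exact hqb hp₀dvd
      · rintro ⟨hqne, hqnd⟩
        refine ⟨hqnd, fun hqdvd => ?_⟩
        have hqnd' := hqnd
        rw [hnd, Finset.mem_filter] at hqnd'
        have hqp := Nat.prime_of_mem_primesBelow hqnd'.1
        have hqk : q ≤ k := by have := Nat.lt_of_mem_primesBelow hqnd'.1; omega
        exact st18_unique k q p₀ hk1 hqp hp₀ hqk hp₀k hqne hqdvd hp₀dvd
    have hprod : ∏ p ∈ nd, p ^ Nat.log p k = p₀ ^ Nat.log p₀ k * T0 := by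
      rw [hT0, hbe]
      exact (Finset.mul_prod_erase nd (fun p => p ^ Nat.log p k) hp₀nd).symm
    refine ⟨p₀ ^ Nat.log p₀ k, Or.inl ⟨p₀, hp₀, hp₀k, hp₀a, hp₀v, rfl⟩, ?_⟩
    rw [st18_PF k a hk1 ha, st18_Lk k hk1, hPT0, ← hsplit, hprod]
    rw [show (∏ p ∈ PB.filter (· ∣ a), p ^ Nat.log p k) * (p₀ ^ Nat.log p₀ k * T0)
        = (p₀ ^ Nat.log p₀ k * ∏ p ∈ PB.filter (· ∣ a), p ^ Nat.log p k) * T0 from by ring]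
    rw [Nat.mul_div_cancel_left]
    exact Nat.mul_pos (pow_pos hp₀.pos _) hdvpos
  · refine ⟨1, Or.inr ⟨hex, rfl⟩, ?_⟩
    have hbe : bad = nd := by
      rw [hbad]
      apply Finset.filter_true_of_mem
      intro q hqnd
      intro hqdvd
      rw [hnd, Finset.mem_filter] at hqnd
      have hqp := Nat.prime_of_mem_primesBelow hqnd.1
      have hqk : q ≤ k := by have := Nat.lt_of_mem_primesBelow hqnd.1; omega
      exact hex ⟨q, hqp, hqk, hqnd.2, by
        rw [← Nat.factorization_def _ hqp]
        exact (hqp.pow_dvd_iff_le_factorization (by omega : k + 1 ≠ 0)).mp hqdvd⟩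
    rw [st18_PF k a hk1 ha, st18_Lk k hk1, hPT0, ← hsplit, one_mul]
    rw [hT0, hbe, Nat.mul_div_cancel_left _ hdvpos]
end
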